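/- Let (M, δ) be a matrix algebra with delta-form δ(x) = d·tr(xσ), let X = (1 ⊗ ⟦1⟧ ⊗ 1) ∘ m* : L²(M) → L²(M^3) (where m is multiplication and ⟦1⟧ inserts the unit in the middle tensor leg). Then for any operator T = ρ(x) ⊗ λ(y) on L²(M⊗M) (right action of x, left action of y): X* (1 ⊗ T) X = d^{-2} tr_M(xσ) tr_M(y σ^{-1}) · id on L²(M), where tr_M = d·tr is the Markov trace. Equivalently X*(1⊗T)X = d^{-2} (tr⊗tr)(T ∘ (ρ(σ) ⊗ λ(σ^{-1}))) · id. -/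

import Mathlib

open scoped ComplexOrder TensorProduct


open Matrix in
lemma stmt9_trace_std {d : ℕ} (A B : Matrix (Fin d) (Fin d) ℂ) (i j : Fin d) :
    (A * single i j (1:ℂ) * B).trace = (B * A) j i := by
  simp [Matrix.trace, Matrix.mul_apply, Matrix.single, ite_and, mul_comm]

open Matrix in
lemma stmt9_sum_trace {d : ℕ} (A B : Matrix (Fin d) (Fin d) ℂ) :
    ∑ i, ∑ j, A j i * B i j = (A*B).trace := by
  rw [Finset.sum_comm]
  simp [Matrix.trace, Matrix.mul_apply]

open Matrix in
lemma stmt9_sum_std {d : ℕ} (A : Matrix (Fin d) (Fin d) ℂ) :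
    ∑ i, ∑ j, single j i (1:ℂ) * A * single i j 1
      = A.trace • (1 : Matrix (Fin d) (Fin d) ℂ) := by
  ext p q
  simp [Matrix.sum_apply, Matrix.trace, Matrix.mul_apply, Matrix.single, ite_and,
    Matrix.one_apply, eq_comm]

open Matrix in
lemma stmt9_std_ct {d : ℕ} (i j : Fin d) :
    (single i j (1:ℂ)).conjTranspose = single j i 1 := by
  ext p q
  simp [single, conjTranspose_apply, and_comm]

open Matrix in
lemma stmt9_star_std {d : ℕ} (i j : Fin d) :
    star (single i j (1:ℂ)) = single j i 1 := by
  ext p q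
  simp [single, conjTranspose_apply, and_comm]

/-- Let `M = ℂ^{d×d}` with delta-form `δ(x) = d·tr(xσ)` and let
`X = (1 ⊗ ⟦1⟧ ⊗ 1) ∘ m* : L²(M) → L²(M³)`.  For the operator `T = ρ(x) ⊗ λ(y)` on
`L²(M⊗M)` (right multiplication by `x` on the first leg, left multiplication by `y` on
the second leg), `X* (1 ⊗ T) X = d^{-2} tr_M(xσ) tr_M(yσ⁻¹) · id` on `L²(M)`, where
`tr_M = d·tr` is the Markov trace.  (The sandwiched identity is expressed via the inner
products: `⟨(1⊗T) X a, X c⟩ = d^{-2} tr_M(xσ) tr_M(yσ⁻¹) ⟨a, c⟩`.) -/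
theorem stmt9 (d : ℕ) (hd : 0 < d)
    (σ : Matrix (Fin d) (Fin d) ℂ) (hσ : σ.PosDef)
    (htr : (σ⁻¹).trace = (d : ℂ))
    -- the GNS inner product on L²(M)
    (ip : Matrix (Fin d) (Fin d) ℂ → Matrix (Fin d) (Fin d) ℂ → ℂ)
    (hip : ∀ x y, ip x y = (d : ℂ) * ((star y) * x * σ).trace)
    -- the inner product on L²(M ⊗ M)
    (ip2 : (Matrix (Fin d) (Fin d) ℂ ⊗[ℂ] Matrix (Fin d) (Fin d) ℂ) →
      (Matrix (Fin d) (Fin d) ℂ ⊗[ℂ] Matrix (Fin d) (Fin d) ℂ) → ℂ)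
    (hip2₁ : ∀ u v w, ip2 (u + v) w = ip2 u w + ip2 v w)
    (hip2₂ : ∀ u v w, ip2 u (v + w) = ip2 u v + ip2 u w)
    (hip2t : ∀ x y z t, ip2 (x ⊗ₜ[ℂ] y) (z ⊗ₜ[ℂ] t) = ip x z * ip y t)
    -- the inner product on L²(M³) = M ⊗ (M ⊗ M)
    (ip3 : (Matrix (Fin d) (Fin d) ℂ ⊗[ℂ]
        (Matrix (Fin d) (Fin d) ℂ ⊗[ℂ] Matrix (Fin d) (Fin d) ℂ)) →
      (Matrix (Fin d) (Fin d) ℂ ⊗[ℂ]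
        (Matrix (Fin d) (Fin d) ℂ ⊗[ℂ] Matrix (Fin d) (Fin d) ℂ)) → ℂ)
    (hip3₁ : ∀ u v w, ip3 (u + v) w = ip3 u w + ip3 v w)
    (hip3₂ : ∀ u v w, ip3 u (v + w) = ip3 u v + ip3 u w)
    (hip3t : ∀ x y z x' y' z', ip3 (x ⊗ₜ[ℂ] (y ⊗ₜ[ℂ] z)) (x' ⊗ₜ[ℂ] (y' ⊗ₜ[ℂ] z'))
      = ip x x' * ip y y' * ip z z')
    -- `m*`, the adjoint of the multiplication map
    (mstar : Matrix (Fin d) (Fin d) ℂ →ₗ[ℂ]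
      Matrix (Fin d) (Fin d) ℂ ⊗[ℂ] Matrix (Fin d) (Fin d) ℂ)
    (hadj : ∀ x ξ, ip2 (mstar x) ξ =
      ip x (LinearMap.mul' ℂ (Matrix (Fin d) (Fin d) ℂ) ξ))
    -- `X = (1 ⊗ ⟦1⟧ ⊗ 1) ∘ m*`
    (X : Matrix (Fin d) (Fin d) ℂ →ₗ[ℂ] Matrix (Fin d) (Fin d) ℂ ⊗[ℂ]
      (Matrix (Fin d) (Fin d) ℂ ⊗[ℂ] Matrix (Fin d) (Fin d) ℂ))
    (hX : X = (TensorProduct.map LinearMap.id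
        (TensorProduct.mk ℂ (Matrix (Fin d) (Fin d) ℂ) (Matrix (Fin d) (Fin d) ℂ)
          (1 : Matrix (Fin d) (Fin d) ℂ))).comp mstar)
    (x y : Matrix (Fin d) (Fin d) ℂ) :
    ∀ a c : Matrix (Fin d) (Fin d) ℂ,
      ip3 (TensorProduct.map LinearMap.id
            (TensorProduct.map (LinearMap.mulRight ℂ x) (LinearMap.mulLeft ℂ y)) (X a))
          (X c)
        = (((d : ℂ) ^ 2)⁻¹ * ((d : ℂ) * (x * σ).trace) *
            ((d : ℂ) * (y * σ⁻¹).trace)) * ip a c := by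
  intro a c
  have hd0 : (d : ℂ) ≠ 0 := Nat.cast_ne_zero.mpr hd.ne'
  have hσis : (σ⁻¹).conjTranspose = σ⁻¹ := hσ.isHermitian.inv
  have hσσ : σ * σ⁻¹ = 1 :=
    Matrix.mul_nonsing_inv σ ((Matrix.isUnit_iff_isUnit_det σ).1 hσ.isUnit)
  -- basic facts about ip
  have ip0l : ∀ w : Matrix (Fin d) (Fin d) ℂ, ip 0 w = 0 := by intro w; simp [hip]
  have ipconj : ∀ p q : Matrix (Fin d) (Fin d) ℂ, (starRingEnd ℂ) (ip p q) = ip q p := by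
    intro p q
    rw [hip, hip, map_mul]
    congr 1
    · simp
    rw [starRingEnd_apply, ← Matrix.trace_conjTranspose, Matrix.conjTranspose_mul,
      Matrix.conjTranspose_mul, hσ.isHermitian.eq, Matrix.star_eq_conjTranspose,
      Matrix.conjTranspose_conjTranspose, Matrix.trace_mul_comm,
      ← Matrix.star_eq_conjTranspose, mul_assoc]
  have ipadd2 : ∀ w p q : Matrix (Fin d) (Fin d) ℂ, ip w (p + q) = ip w p + ip w q := by
    intro w p q
    simp [hip, add_mul, Matrix.trace_add, mul_add]
  have ipsmul2 : ∀ (w : Matrix (Fin d) (Fin d) ℂ) (τ : ℂ) (p : Matrix (Fin d) (Fin d) ℂ),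
      ip w (τ • p) = (starRingEnd ℂ) τ * ip w p := by
    intro w τ p
    simp only [hip, star_smul, smul_mul_assoc, Matrix.trace_smul, smul_eq_mul,
      starRingEnd_apply]
    ring
  -- derived zero lemmas for ip2/ip3
  have ip2z1 : ∀ w, ip2 0 w = 0 := by
    intro w; have h := hip2₁ 0 0 w; rw [add_zero] at h; exact (left_eq_add.mp h)
  have ip2z2 : ∀ w, ip2 w 0 = 0 := by
    intro w; have h := hip2₂ w 0 0; rw [add_zero] at h; exact (left_eq_add.mp h)
  have ip3z1 : ∀ w, ip3 0 w = 0 := by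
    intro w; have h := hip3₁ 0 0 w; rw [add_zero] at h; exact (left_eq_add.mp h)
  have ip3z2 : ∀ w, ip3 w 0 = 0 := by
    intro w; have h := hip3₂ w 0 0; rw [add_zero] at h; exact (left_eq_add.mp h)
  set Φ : Matrix (Fin d) (Fin d) ℂ ⊗[ℂ] Matrix (Fin d) (Fin d) ℂ →ₗ[ℂ]
      Matrix (Fin d) (Fin d) ℂ ⊗[ℂ] (Matrix (Fin d) (Fin d) ℂ ⊗[ℂ] Matrix (Fin d) (Fin d) ℂ) :=
    TensorProduct.map LinearMap.id
      (TensorProduct.mk ℂ (Matrix (Fin d) (Fin d) ℂ) (Matrix (Fin d) (Fin d) ℂ)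
        (1 : Matrix (Fin d) (Fin d) ℂ)) with hΦ
  set T : Matrix (Fin d) (Fin d) ℂ ⊗[ℂ] (Matrix (Fin d) (Fin d) ℂ ⊗[ℂ] Matrix (Fin d) (Fin d) ℂ)
      →ₗ[ℂ] Matrix (Fin d) (Fin d) ℂ ⊗[ℂ] (Matrix (Fin d) (Fin d) ℂ ⊗[ℂ] Matrix (Fin d) (Fin d) ℂ) :=
    TensorProduct.map LinearMap.id
      (TensorProduct.map (LinearMap.mulRight ℂ x) (LinearMap.mulLeft ℂ y)) with hT
  set Θ : Matrix (Fin d) (Fin d) ℂ ⊗[ℂ] Matrix (Fin d) (Fin d) ℂ →ₗ[ℂ]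
      Matrix (Fin d) (Fin d) ℂ ⊗[ℂ] Matrix (Fin d) (Fin d) ℂ :=
    TensorProduct.map LinearMap.id (LinearMap.mulLeft ℂ (star y)) with hΘ
  -- Step A
  have hA : ∀ ξ η : Matrix (Fin d) (Fin d) ℂ ⊗[ℂ] Matrix (Fin d) (Fin d) ℂ,
      ip3 (T (Φ ξ)) (Φ η) = ((d : ℂ) * (x * σ).trace) * ip2 ξ (Θ η) := by
    intro ξ
    induction ξ using TensorProduct.induction_on with
    | zero =>
      intro η
      rw [Φ.map_zero, T.map_zero, ip3z1, ip2z1, mul_zero]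
    | tmul u v =>
      intro η
      induction η using TensorProduct.induction_on with
      | zero => rw [Φ.map_zero, Θ.map_zero, ip3z2, ip2z2, mul_zero]
      | tmul u' v' =>
        simp only [hΦ, hT, hΘ, TensorProduct.map_tmul, TensorProduct.mk_apply,
          LinearMap.id_coe, id_eq, LinearMap.mulRight_apply, LinearMap.mulLeft_apply]
        rw [hip3t, hip2t]
        have h1 : ip (1 * x) (1 : Matrix (Fin d) (Fin d) ℂ) = (d : ℂ) * (x * σ).trace := by
          simp [hip]
        have h2 : ip (y * v) v' = ip v (star y * v') := by
          simp only [hip, star_mul, star_star, mul_assoc]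
        rw [h1, h2]
        ring
      | add η₁ η₂ ih₁ ih₂ =>
        rw [Φ.map_add, Θ.map_add, hip3₂, hip2₂, ih₁, ih₂]
        ring
    | add ξ₁ ξ₂ ih₁ ih₂ =>
      intro η
      rw [Φ.map_add, T.map_add, hip3₁, hip2₁, ih₁, ih₂]
      ring
  -- Step C
  have hC : ∀ ξ : Matrix (Fin d) (Fin d) ℂ ⊗[ℂ] Matrix (Fin d) (Fin d) ℂ,
      ∀ w : Matrix (Fin d) (Fin d) ℂ,
      ip (LinearMap.mul' ℂ (Matrix (Fin d) (Fin d) ℂ) (Θ ξ)) w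
        = (d : ℂ)⁻¹ * ∑ i, ∑ j, ip2 ξ
            ((w * Matrix.single j i 1 * y * σ⁻¹) ⊗ₜ[ℂ] Matrix.single i j 1) := by
    intro ξ
    induction ξ using TensorProduct.induction_on with
    | zero =>
      intro w
      rw [Θ.map_zero, (LinearMap.mul' ℂ (Matrix (Fin d) (Fin d) ℂ)).map_zero, ip0l]
      simp [ip2z1]
    | tmul u v =>
      intro w
      simp only [hΘ, TensorProduct.map_tmul, LinearMap.id_coe, id_eq,
        LinearMap.mulLeft_apply, LinearMap.mul'_apply]
      have key : ∀ i j : Fin d,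
          ip2 (u ⊗ₜ[ℂ] v)
            ((w * Matrix.single j i 1 * y * σ⁻¹) ⊗ₜ[ℂ] Matrix.single i j 1)
          = (d : ℂ) * (d : ℂ) *
            ((star w * u * star y) j i * (v * σ) i j) := by
        intro i j
        rw [hip2t, hip, hip]
        have e1 : star (w * Matrix.single j i 1 * y * σ⁻¹)
            = σ⁻¹ * star y * Matrix.single i j 1 * star w := by
          simp only [star_mul, Matrix.star_eq_conjTranspose, stmt9_std_ct, hσis, mul_assoc]
        rw [e1]
        have e2 : (σ⁻¹ * star y * Matrix.single i j 1 * star w * u * σ).trace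
            = (star w * u * star y) j i := by
          have h' : σ⁻¹ * star y * Matrix.single i j 1 * star w * u * σ
              = (σ⁻¹ * star y) * Matrix.single i j 1 * (star w * u * σ) := by
            simp only [mul_assoc]
          rw [h', stmt9_trace_std]
          have h'' : star w * u * σ * (σ⁻¹ * star y) = star w * u * star y := by
            rw [mul_assoc (star w * u), ← mul_assoc σ, hσσ, one_mul]
          rw [h'']
        have e3 : (star (Matrix.single i j (1:ℂ)) * v * σ).trace = (v * σ) i j := by
          rw [stmt9_star_std, show Matrix.single j i (1:ℂ) * v * σ
            = (1 : Matrix (Fin d) (Fin d) ℂ) * Matrix.single j i 1 * (v * σ) by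
              rw [one_mul, mul_assoc], stmt9_trace_std, mul_one]
        rw [e2, e3]
        ring
      rw [Finset.sum_congr rfl fun i _ => Finset.sum_congr rfl fun j _ => key i j]
      simp only [← Finset.mul_sum]
      rw [stmt9_sum_trace (star w * u * star y) (v * σ)]
      rw [hip]
      have h3 : star w * u * star y * (v * σ) = star w * (u * (star y * v)) * σ := by
        simp only [mul_assoc]
      rw [h3]
      field_simp
    | add ξ₁ ξ₂ ih₁ ih₂ =>
      intro w
      have ipadd1 : ∀ p q r : Matrix (Fin d) (Fin d) ℂ, ip (p + q) r = ip p r + ip q r := by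
        intro p q r; simp [hip, add_mul, mul_add, Matrix.trace_add]
      rw [Θ.map_add, (LinearMap.mul' ℂ (Matrix (Fin d) (Fin d) ℂ)).map_add, ipadd1, ih₁ w, ih₂ w]
      simp only [hip2₁, Finset.sum_add_distrib, mul_add]
  -- assemble
  have hXa : X a = Φ (mstar a) := by rw [hX]; rfl
  have hXc : X c = Φ (mstar c) := by rw [hX]; rfl
  rw [show (TensorProduct.map LinearMap.id
      (TensorProduct.map (LinearMap.mulRight ℂ x) (LinearMap.mulLeft ℂ y)) (X a)) = T (X a)
      from rfl,
    hXa, hXc, hA (mstar a) (mstar c), hadj a (Θ (mstar c))]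
  -- compute ip of the middle vector against a
  have hg : ip (LinearMap.mul' ℂ (Matrix (Fin d) (Fin d) ℂ) (Θ (mstar c))) a
      = (d : ℂ)⁻¹ * ((starRingEnd ℂ) ((y * σ⁻¹).trace) * ip c a) := by
    rw [hC (mstar c) a]
    congr 1
    have step : ∀ i j : Fin d,
        ip2 (mstar c)
          ((a * Matrix.single j i 1 * y * σ⁻¹) ⊗ₜ[ℂ] Matrix.single i j 1)
        = ip c (a * (Matrix.single j i 1 * (y * σ⁻¹) * Matrix.single i j 1)) := by
      intro i j
      rw [hadj, LinearMap.mul'_apply]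
      congr 1
      simp only [mul_assoc]
    rw [Finset.sum_congr rfl fun i _ => Finset.sum_congr rfl fun j _ => step i j]
    set φ : Matrix (Fin d) (Fin d) ℂ →+ ℂ :=
      AddMonoidHom.mk' (fun z => ip c z) (fun p q => ipadd2 c p q) with hφ
    have hφ' : ∀ z, ip c z = φ z := fun _ => rfl
    simp only [hφ']
    rw [show (∑ i, ∑ j, φ (a * (Matrix.single j i 1 * (y * σ⁻¹) * Matrix.single i j 1)))
        = φ (∑ i, ∑ j, a * (Matrix.single j i 1 * (y * σ⁻¹) * Matrix.single i j 1))
      from by rw [map_sum]; exact Finset.sum_congr rfl fun i _ => (map_sum φ _ _).symm]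
    have hsum : (∑ i, ∑ j, a * (Matrix.single j i 1 * (y * σ⁻¹) * Matrix.single i j 1))
        = (y * σ⁻¹).trace • a := by
      have : ∀ i : Fin d, (∑ j, a * (Matrix.single j i 1 * (y * σ⁻¹) * Matrix.single i j 1))
          = a * ∑ j, Matrix.single j i 1 * (y * σ⁻¹) * Matrix.single i j 1 := by
        intro i; rw [Finset.mul_sum]
      rw [Finset.sum_congr rfl fun i _ => this i, ← Finset.mul_sum, stmt9_sum_std,
        mul_smul_comm, mul_one]
    rw [hsum, ← hφ', ipsmul2]
    rfl
  have hfin : ip a (LinearMap.mul' ℂ (Matrix (Fin d) (Fin d) ℂ) (Θ (mstar c)))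
      = (d : ℂ)⁻¹ * ((y * σ⁻¹).trace * ip a c) := by
    rw [← ipconj (LinearMap.mul' ℂ (Matrix (Fin d) (Fin d) ℂ) (Θ (mstar c))) a, hg]
    simp only [map_mul, map_inv₀, Complex.conj_natCast, Complex.conj_conj]
    rw [ipconj c a]
  rw [hfin]
  field_simp
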